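/- Let f : ℝⁿ → ℝⁿ be continuously differentiable, P a real symmetric positive definite n×n matrix, λ ≥ 0, and ε > 0 such that for every ξ ∈ ℝⁿ, Df(ξ)ᵀ P + P Df(ξ) + 2λ P ⪯ −ε I. Let x, y : [0,∞) → ℝⁿ be two solutions of the differential equation ξ' = f(ξ). Then for all t ≥ 0, (x(t) − y(t))ᵀ P (x(t) − y(t)) ≤ e^{−2λt} (x(0) − y(0))ᵀ P (x(0) − y(0)); in particular any two solutions of a 0-dominant system with rate λ > 0 converge to each other exponentially. -/

import Mathlib

open Matrix

/-- The Jacobian matrix of a vector field `f : ℝⁿ → ℝⁿ` at a point `ξ`. -/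
noncomputable def jacobianMatrix {n : ℕ} (f : (Fin n → ℝ) → (Fin n → ℝ)) (ξ : Fin n → ℝ) :
    Matrix (Fin n) (Fin n) ℝ :=
  Matrix.of fun i j => fderiv ℝ f ξ (Pi.single j 1) i

lemma jacobianMatrix_mulVec {n : ℕ} (f : (Fin n → ℝ) → (Fin n → ℝ)) (ξ v : Fin n → ℝ) :
    (jacobianMatrix f ξ).mulVec v = fderiv ℝ f ξ v := by
  have hv : v = ∑ j, v j • (Pi.single j 1 : Fin n → ℝ) := by
    have hsing : ∀ j, v j • (Pi.single j 1 : Fin n → ℝ) = Pi.single j (v j) := by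
      intro j; rw [← Pi.single_smul, smul_eq_mul, mul_one]
    rw [Finset.sum_congr rfl fun j _ => hsing j, Finset.univ_sum_single]
  funext i
  conv_rhs => rw [hv]
  rw [map_sum]
  simp [jacobianMatrix, Matrix.mulVec, dotProduct, mul_comm]

lemma hasDerivAt_pi_apply {n : ℕ} {u : ℝ → Fin n → ℝ} {u' : Fin n → ℝ} {t : ℝ}
    (hu : HasDerivAt u u' t) (i : Fin n) :
    HasDerivAt (fun s => u s i) (u' i) t :=
  (ContinuousLinearMap.proj (R := ℝ) (φ := fun _ : Fin n => ℝ) i).hasFDerivAt.comp_hasDerivAt t hu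

lemma hasDerivAt_quadForm {n : ℕ} (P : Matrix (Fin n) (Fin n) ℝ) {u : ℝ → Fin n → ℝ}
    {u' : Fin n → ℝ} {t : ℝ} (hu : HasDerivAt u u' t) :
    HasDerivAt (fun s => u s ⬝ᵥ P.mulVec (u s))
      (u' ⬝ᵥ P.mulVec (u t) + u t ⬝ᵥ P.mulVec u') t := by
  have hc : ∀ i, HasDerivAt (fun s => u s i) (u' i) t := fun i => hasDerivAt_pi_apply hu i
  have H : HasDerivAt (fun s => ∑ i, ∑ j, u s i * (P i j * u s j))
      (∑ i, ∑ j, (u' i * (P i j * u t j) + u t i * (P i j * u' j))) t := by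
    apply HasDerivAt.fun_sum; intro i _
    apply HasDerivAt.fun_sum; intro j _
    exact (hc i).mul ((hc j).const_mul _)
  have hfun : (fun s => u s ⬝ᵥ P.mulVec (u s))
      = fun s => ∑ i, ∑ j, u s i * (P i j * u s j) := by
    funext s; simp [dotProduct, Matrix.mulVec, Finset.mul_sum]
  rw [hfun]
  convert H using 1
  simp [dotProduct, Matrix.mulVec, Finset.mul_sum, Finset.sum_add_distrib]

lemma hasDerivAt_linForm {n : ℕ} (P : Matrix (Fin n) (Fin n) ℝ) (a : Fin n → ℝ)
    {g : ℝ → Fin n → ℝ} {g' : Fin n → ℝ} {t : ℝ} (hg : HasDerivAt g g' t) :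
    HasDerivAt (fun s => a ⬝ᵥ P.mulVec (g s)) (a ⬝ᵥ P.mulVec g') t := by
  have hc : ∀ i, HasDerivAt (fun s => g s i) (g' i) t := fun i => hasDerivAt_pi_apply hg i
  have H : HasDerivAt (fun s => ∑ i, ∑ j, a i * (P i j * g s j))
      (∑ i, ∑ j, a i * (P i j * g' j)) t := by
    apply HasDerivAt.fun_sum; intro i _
    apply HasDerivAt.fun_sum; intro j _
    exact ((hc j).const_mul _).const_mul _
  have hfun : (fun s => a ⬝ᵥ P.mulVec (g s))
      = fun s => ∑ i, ∑ j, a i * (P i j * g s j) := by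
    funext s; simp [dotProduct, Matrix.mulVec, Finset.mul_sum]
  rw [hfun]
  convert H using 1
  simp [dotProduct, Matrix.mulVec, Finset.mul_sum]

lemma symm_dot {n : ℕ} {P : Matrix (Fin n) (Fin n) ℝ} (hPsymm : Pᵀ = P) (a b : Fin n → ℝ) :
    a ⬝ᵥ P.mulVec b = b ⬝ᵥ P.mulVec a := by
  calc a ⬝ᵥ P.mulVec b = Matrix.vecMul a P ⬝ᵥ b := Matrix.dotProduct_mulVec _ _ _
    _ = P.mulVec a ⬝ᵥ b := by conv_rhs => rw [← Matrix.vecMul_transpose P a, hPsymm]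
    _ = b ⬝ᵥ P.mulVec a := dotProduct_comm _ _

/-- For a `0`-dominant system with rate `λ` (positive definite certificate
`P`), any two solutions contract exponentially in the metric induced by `P`:
`(x(t) − y(t))ᵀ P (x(t) − y(t)) ≤ e^{−2λt} (x(0) − y(0))ᵀ P (x(0) − y(0))`. -/
theorem zero_dominant_incremental_contraction
    {n : ℕ} (f : (Fin n → ℝ) → (Fin n → ℝ)) (hf : ContDiff ℝ 1 f)
    (P : Matrix (Fin n) (Fin n) ℝ) (hP : P.PosDef)
    (lam ε : ℝ) (hlam : 0 ≤ lam) (hε : 0 < ε)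
    (hLMI : ∀ ξ : Fin n → ℝ, ∀ v : Fin n → ℝ,
      v ⬝ᵥ (((jacobianMatrix f ξ)ᵀ * P + P * jacobianMatrix f ξ +
        (2 * lam) • P).mulVec v) ≤ -ε * (v ⬝ᵥ v))
    (x y : ℝ → (Fin n → ℝ))
    (hx : ∀ t, 0 ≤ t → HasDerivAt x (f (x t)) t)
    (hy : ∀ t, 0 ≤ t → HasDerivAt y (f (y t)) t) :
    ∀ t, 0 ≤ t →
      (x t - y t) ⬝ᵥ (P.mulVec (x t - y t)) ≤
        Real.exp (-2 * lam * t) * ((x 0 - y 0) ⬝ᵥ (P.mulVec (x 0 - y 0))) := by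
  have hPsymm : Pᵀ = P := by
    have := hP.isHermitian
    rwa [Matrix.IsHermitian, Matrix.conjTranspose_eq_transpose_of_trivial] at this
  -- Step 1: pointwise bound from the LMI
  have key : ∀ ξ z : Fin n → ℝ,
      z ⬝ᵥ P.mulVec (fderiv ℝ f ξ z) ≤ -lam * (z ⬝ᵥ P.mulVec z) := by
    intro ξ z
    have hLMI' := hLMI ξ z
    set J := jacobianMatrix f ξ with hJ
    have hzz : (0:ℝ) ≤ z ⬝ᵥ z :=
      Finset.sum_nonneg fun i _ => mul_self_nonneg _
    have h1 : z ⬝ᵥ (Jᵀ * P).mulVec z = z ⬝ᵥ P.mulVec (J.mulVec z) := by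
      rw [← Matrix.mulVec_mulVec, Matrix.dotProduct_mulVec z Jᵀ, Matrix.vecMul_transpose]
      exact symm_dot hPsymm _ _
    have h2 : z ⬝ᵥ (P * J).mulVec z = z ⬝ᵥ P.mulVec (J.mulVec z) := by
      rw [← Matrix.mulVec_mulVec]
    have h3 : z ⬝ᵥ ((2 * lam) • P).mulVec z = 2 * lam * (z ⬝ᵥ P.mulVec z) := by
      rw [Matrix.smul_mulVec, dotProduct_smul, smul_eq_mul]
    rw [Matrix.add_mulVec, Matrix.add_mulVec, dotProduct_add, dotProduct_add,
      h1, h2, h3] at hLMI'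
    have hJz : J.mulVec z = fderiv ℝ f ξ z := jacobianMatrix_mulVec f ξ z
    rw [hJz] at hLMI'
    nlinarith [mul_nonneg hε.le hzz]
  -- Step 2: contraction inequality along a segment (mean value argument)
  have contract : ∀ v w : Fin n → ℝ,
      (w - v) ⬝ᵥ P.mulVec (f w - f v) ≤ -lam * ((w - v) ⬝ᵥ P.mulVec (w - v)) := by
    intro v w
    set z := w - v with hz
    set c : ℝ := -lam * (z ⬝ᵥ P.mulVec z) with hc
    set h : ℝ → ℝ := fun s => z ⬝ᵥ P.mulVec (f (v + s • z)) with hh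
    have hg : ∀ s : ℝ, HasDerivAt (fun s : ℝ => v + s • z) z s := by
      intro s
      have := ((hasDerivAt_id s).smul_const z).const_add v
      simpa using this
    have hhd : ∀ s : ℝ, HasDerivAt h (z ⬝ᵥ P.mulVec (fderiv ℝ f (v + s • z) z)) s := by
      intro s
      have hfd : HasFDerivAt f (fderiv ℝ f (v + s • z)) (v + s • z) :=
        (hf.differentiable one_ne_zero (v + s • z)).hasFDerivAt
      have hcomp : HasDerivAt (fun s : ℝ => f (v + s • z)) (fderiv ℝ f (v + s • z) z) s :=
        hfd.comp_hasDerivAt s (hg s)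
      exact hasDerivAt_linForm P z hcomp
    set φ : ℝ → ℝ := fun s => c * s - h s with hφdef
    have hφd : ∀ s : ℝ, HasDerivAt φ (c - z ⬝ᵥ P.mulVec (fderiv ℝ f (v + s • z) z)) s :=
      fun s => by have := ((hasDerivAt_id s).const_mul c).sub (hhd s); rw [mul_one] at this; exact this
    have hmono : Monotone φ := by
      apply monotone_of_deriv_nonneg
      · exact fun s => (hφd s).differentiableAt
      · intro s
        rw [(hφd s).deriv]
        have := key (v + s • z) z
        linarith
    have hφ01 : φ 0 ≤ φ 1 := hmono zero_le_one
    have h10 : h 1 - h 0 ≤ c := by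
      simp only [hφdef, mul_zero, mul_one, zero_sub] at hφ01
      linarith
    have h1 : h 1 = z ⬝ᵥ P.mulVec (f w) := by
      have hvw : v + (1:ℝ) • z = w := by rw [one_smul, hz]; abel
      simp only [hh, hvw]
    have h0 : h 0 = z ⬝ᵥ P.mulVec (f v) := by simp [hh]
    have : z ⬝ᵥ P.mulVec (f w - f v) = h 1 - h 0 := by
      rw [h1, h0, Matrix.mulVec_sub, dotProduct_sub]
    rw [this]
    exact h10.trans_eq rfl
  -- Step 3: Lyapunov function and Grönwall-type argument
  set V : ℝ → ℝ := fun s => (x s - y s) ⬝ᵥ P.mulVec (x s - y s) with hV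
  set W : ℝ → ℝ := fun s => Real.exp (2 * lam * s) * V s with hW
  have hVd : ∀ s, 0 ≤ s → HasDerivAt V
      ((f (x s) - f (y s)) ⬝ᵥ P.mulVec (x s - y s)
        + (x s - y s) ⬝ᵥ P.mulVec (f (x s) - f (y s))) s := by
    intro s hs
    exact hasDerivAt_quadForm P ((hx s hs).sub (hy s hs))
  have hVd' : ∀ s, 0 ≤ s →
      (f (x s) - f (y s)) ⬝ᵥ P.mulVec (x s - y s)
        + (x s - y s) ⬝ᵥ P.mulVec (f (x s) - f (y s)) ≤ -(2 * lam) * V s := by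
    intro s hs
    have hsym : (f (x s) - f (y s)) ⬝ᵥ P.mulVec (x s - y s)
        = (x s - y s) ⬝ᵥ P.mulVec (f (x s) - f (y s)) := symm_dot hPsymm _ _
    have := contract (y s) (x s)
    rw [hsym]
    simp only [hV]
    linarith
  have hWd : ∀ s, 0 ≤ s → HasDerivAt W
      (Real.exp (2 * lam * s) * (2 * lam) * V s
        + Real.exp (2 * lam * s) * ((f (x s) - f (y s)) ⬝ᵥ P.mulVec (x s - y s)
          + (x s - y s) ⬝ᵥ P.mulVec (f (x s) - f (y s)))) s := by
    intro s hs
    have hexp : HasDerivAt (fun s : ℝ => Real.exp (2 * lam * s))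
        (Real.exp (2 * lam * s) * (2 * lam)) s := by
      have := ((hasDerivAt_id s).const_mul (2 * lam)).exp
      simpa [mul_comm] using this
    exact hexp.mul (hVd s hs)
  have hWanti : AntitoneOn W (Set.Ici (0:ℝ)) := by
    apply antitoneOn_of_deriv_nonpos (convex_Ici 0)
    · exact fun s hs => ((hWd s hs).continuousAt).continuousWithinAt
    · intro s hs
      rw [interior_Ici] at hs
      exact ((hWd s hs.le).differentiableAt).differentiableWithinAt
    · intro s hs
      rw [interior_Ici] at hs
      rw [(hWd s hs.le).deriv]
      have h1 := hVd' s hs.le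
      have h2 : (0:ℝ) < Real.exp (2 * lam * s) := Real.exp_pos _
      nlinarith
  intro t ht
  have hWt : W t ≤ W 0 := hWanti (Set.self_mem_Ici) ht ht
  have hW0 : W 0 = V 0 := by simp [hW]
  rw [hW0] at hWt
  have hposn : (0:ℝ) < Real.exp (2 * lam * t) := Real.exp_pos _
  have hexpinv : Real.exp (-2 * lam * t) * Real.exp (2 * lam * t) = 1 := by
    rw [← Real.exp_add]; ring_nf; exact Real.exp_zero
  have := mul_le_mul_of_nonneg_left hWt (Real.exp_nonneg (-2 * lam * t))
  calc (x t - y t) ⬝ᵥ P.mulVec (x t - y t) = V t := rfl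
    _ = Real.exp (-2 * lam * t) * (Real.exp (2 * lam * t) * V t) := by
        rw [← mul_assoc, hexpinv, one_mul]
    _ ≤ Real.exp (-2 * lam * t) * V 0 := this
    _ = Real.exp (-2 * lam * t) * ((x 0 - y 0) ⬝ᵥ P.mulVec (x 0 - y 0)) := rfl
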